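/- Let S = ⟨n_1, …, n_k⟩ be a numerical semigroup minimally generated by n_1, …, n_k ∈ ℕ with n_1 < ⋯ < n_k, and let m ∈ 𝒜(S) = {n_1, …, n_k}. If L(s + m) = L(s) + 1 for all s ∈ S, then m = n_1. -/

import Mathlib

namespace PaperNS

/-- The numerical semigroup `⟨n_1, …, n_k⟩` generated by `n`. -/
def NS {k : ℕ} (n : Fin k → ℕ) : AddSubmonoid ℕ := AddSubmonoid.closure (Set.range n)

/-- The set of factorizations of `s` over the generators `n`. -/
def nsZ {k : ℕ} (n : Fin k → ℕ) (s : ℕ) : Set (Fin k → ℕ) :=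
  {c | ∑ i, c i * n i = s}

/-- The longest factorization length of `s`. -/
noncomputable def nsL {k : ℕ} (n : Fin k → ℕ) (s : ℕ) : ℕ :=
  sSup ((fun c => ∑ i, c i) '' nsZ n s)

/-- The shortest factorization length of `s`. -/
noncomputable def nsl {k : ℕ} (n : Fin k → ℕ) (s : ℕ) : ℕ :=
  sInf ((fun c => ∑ i, c i) '' nsZ n s)

/-- `{n_1, …, n_k}` minimally generates: no proper subset generates the same monoid. -/
def MinimallyGenerates {k : ℕ} (n : Fin k → ℕ) : Prop :=
  ∀ T : Set ℕ, T ⊂ Set.range n → AddSubmonoid.closure T ≠ NS n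

theorem statement8 {k : ℕ} (hk : 0 < k) (n : Fin k → ℕ)
    (hpos : ∀ i, 0 < n i) (hmono : StrictMono n)
    (hgcd : Finset.univ.gcd n = 1) (hmin : MinimallyGenerates n)
    (m : ℕ) (hm : m ∈ Set.range n)
    (hL : ∀ s ∈ NS n, nsL n (s + m) = nsL n s + 1) :
    m = n ⟨0, hk⟩ := by
  -- lengths of factorizations of s are bounded by s
  have hbdd : ∀ s : ℕ, ∀ x ∈ ((fun c => ∑ i, c i) '' nsZ n s), x ≤ s := by
    rintro s x ⟨c, hc, rfl⟩
    calc ∑ i, c i ≤ ∑ i, c i * n i :=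
          Finset.sum_le_sum (fun i _ => Nat.le_mul_of_pos_right _ (hpos i))
      _ = s := hc
  have hL0 : nsL n 0 = 0 := Nat.le_zero.mp (csSup_le' (hbdd 0))
  -- m ∈ NS n
  have hmNS : m ∈ NS n := AddSubmonoid.subset_closure hm
  -- L(t*m) = t by induction
  have hLt : ∀ t : ℕ, nsL n (t * m) = t := by
    intro t
    induction t with
    | zero => simpa using hL0
    | succ t ih =>
      have hmem : t * m ∈ NS n := by
        have := AddSubmonoid.nsmul_mem (NS n) hmNS t
        simpa [nsmul_eq_mul] using this
      have := hL (t * m) hmem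
      rw [ih] at this
      rw [Nat.succ_mul]
      exact this
  set n0 := n ⟨0, hk⟩ with hn0
  -- m is a factorization length of n0 * m via m copies of n0
  have hmle : m ≤ nsL n (n0 * m) := by
    apply le_csSup ⟨n0 * m, fun x hx => hbdd _ x hx⟩
    refine ⟨fun j => if j = ⟨0, hk⟩ then m else 0, ?_, ?_⟩
    · show (∑ i, (if i = ⟨0, hk⟩ then m else 0) * n i) = n0 * m
      simp only [ite_mul, zero_mul]
      rw [Finset.sum_ite_eq' Finset.univ (⟨0, hk⟩ : Fin k) (fun j => m * n j)]
      simp [mul_comm, hn0]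
    · simp [Finset.sum_ite_eq' Finset.univ (⟨0, hk⟩ : Fin k) (fun _ => m)]
  rw [hLt n0] at hmle
  obtain ⟨i, rfl⟩ := hm
  exact le_antisymm hmle (hmono.monotone (Fin.mk_le_of_le_val (Nat.zero_le _)))

end PaperNS
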